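/- Let M and N be m × n matrices with entries in ℕ. Let colSort(X) denote the matrix obtained from X by rearranging each column into nonincreasing order (top to bottom). Then colSort(M + N) ≤ colSort(M) + colSort(N) in the row-major lexicographic order on matrices, where + denotes entrywise addition. -/
import Mathlib


/-- The nonincreasing rearrangement of a tuple. -/
noncomputable def sortDesc {α : Type*} [LinearOrder α] {n : ℕ} (X : Fin n → α) : Fin n → α :=
  X ∘ Tuple.sort (fun i => OrderDual.toDual (X i))

/-- Rearrange each column of a matrix into nonincreasing order (top to bottom). -/
noncomputable def colSort {α : Type*} [LinearOrder α] {m n : ℕ}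
    (M : Fin m → Fin n → α) : Fin m → Fin n → α :=
  fun i j => sortDesc (fun i' => M i' j) i

/-- The row-major lexicographic order on matrices: `M ≤ N` iff `M = N` or, at the first
position (reading rows top to bottom and each row left to right) where they differ,
the entry of `M` is smaller. -/
def MatLexLe {α : Type*} [LinearOrder α] {m n : ℕ} (M N : Fin m → Fin n → α) : Prop :=
  M = N ∨ ∃ i j, (∀ i', i' < i → M i' = N i') ∧ (∀ j', j' < j → M i j' = N i j') ∧
    M i j < N i j

lemma antitone_sortDesc {α : Type*} [LinearOrder α] {n : ℕ} (X : Fin n → α) :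
    Antitone (sortDesc X) := by
  intro i j hij
  have := Tuple.monotone_sort (fun i => OrderDual.toDual (X i)) hij
  exact this

lemma le_apply_of_strictMono {s m : ℕ} {φ : Fin s → Fin m} (h : StrictMono φ) :
    ∀ i : Fin s, (i : ℕ) ≤ (φ i : ℕ) := by
  intro ⟨v, hv⟩
  induction v with
  | zero => simp
  | succ k ih =>
    have hk : k < s := Nat.lt_of_succ_lt hv
    have h1 : (φ ⟨k, hk⟩ : ℕ) < (φ ⟨k+1, hv⟩ : ℕ) := h (by simp [Fin.lt_def])
    have h2 := ih hk
    simp only [Fin.val_mk] at h2 ⊢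
    omega

/-- sum of antitone f over any finset T ≤ sum of first T.card values. -/
lemma sum_le_sum_first {m : ℕ} {f : Fin m → ℕ} (hf : Antitone f) (T : Finset (Fin m))
    {s : ℕ} (hs : T.card = s) (hsm : s ≤ m) :
    ∑ t ∈ T, f t ≤ ∑ i : Fin s, f (Fin.castLE hsm i) := by
  have e := T.orderIsoOfFin hs
  rw [← Finset.sum_coe_sort T (fun t => f t)]
  rw [← e.toEquiv.sum_comp (fun t => f t.1)]
  apply Finset.sum_le_sum
  intro i _
  apply hf
  rw [Fin.le_def]
  exact le_apply_of_strictMono (fun a b hab => by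
    exact Subtype.coe_lt_coe.mpr (e.strictMono hab)) i

lemma sum_castLE_eq_Iic {m : ℕ} (f : Fin m → ℕ) (k : Fin m) :
    ∑ i : Fin ((k : ℕ) + 1), f (Fin.castLE k.isLt i) = ∑ i ∈ Finset.Iic k, f i := by
  apply Finset.sum_bij (fun i _ => Fin.castLE k.isLt i)
  · intro i _
    simp [Finset.mem_Iic, Fin.le_def, Fin.castLE]
    omega
  · intro a _ b _ hab
    exact Fin.castLE_injective _ hab
  · intro j hj
    simp only [Finset.mem_Iic, Fin.le_def] at hj
    exact ⟨⟨j, by omega⟩, Finset.mem_univ _, rfl⟩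
  · intros; rfl

lemma sum_le_sum_Iic {m : ℕ} {f : Fin m → ℕ} (hf : Antitone f) (T : Finset (Fin m))
    (k : Fin m) (hs : T.card = (k : ℕ) + 1) :
    ∑ t ∈ T, f t ≤ ∑ i ∈ Finset.Iic k, f i := by
  rw [← sum_castLE_eq_Iic f k]
  exact sum_le_sum_first hf T hs k.isLt

/-- image under perm of sorted sum -/
lemma sortDesc_sum_Iic_le {m : ℕ} (a : Fin m → ℕ) (T : Finset (Fin m)) (k : Fin m)
    (hs : T.card = (k : ℕ) + 1) :
    ∑ t ∈ T, a t ≤ ∑ i ∈ Finset.Iic k, sortDesc a i := by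
  set σ := Tuple.sort (fun i => OrderDual.toDual (a i)) with hσ
  have hperm : sortDesc a = a ∘ σ := rfl
  have h1 : ∑ t ∈ T, a t = ∑ u ∈ T.image σ.symm, (a ∘ σ) u := by
    rw [Finset.sum_image (fun x _ y _ h => σ.symm.injective h)]
    simp
  rw [h1, hperm]
  apply sum_le_sum_Iic (antitone_sortDesc a) _ k
  rw [Finset.card_image_of_injective _ σ.symm.injective, hs]

lemma majorize {m : ℕ} (a b : Fin m → ℕ) (k : Fin m) :
    ∑ i ∈ Finset.Iic k, sortDesc (a + b) i ≤
      ∑ i ∈ Finset.Iic k, (sortDesc a i + sortDesc b i) := by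
  set τ := Tuple.sort (fun i => OrderDual.toDual ((a + b) i)) with hτ
  have hperm : sortDesc (a + b) = (a + b) ∘ τ := rfl
  set T := (Finset.Iic k).image τ with hT
  have hcard : T.card = (k : ℕ) + 1 := by
    rw [hT, Finset.card_image_of_injective _ τ.injective, Fin.card_Iic]
  have h1 : ∑ i ∈ Finset.Iic k, sortDesc (a + b) i = ∑ t ∈ T, (a t + b t) := by
    rw [hperm, hT, Finset.sum_image (fun x _ y _ h => τ.injective h)]
    rfl
  rw [h1, Finset.sum_add_distrib, Finset.sum_add_distrib]
  exact Nat.add_le_add (sortDesc_sum_Iic_le a T k hcard) (sortDesc_sum_Iic_le b T k hcard)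

lemma col_lex {m : ℕ} (a b : Fin m → ℕ) (i : Fin m)
    (h : ∀ i' < i, sortDesc (a + b) i' = sortDesc a i' + sortDesc b i') :
    sortDesc (a + b) i ≤ sortDesc a i + sortDesc b i := by
  have hmaj := majorize a b i
  have hsplit : Finset.Iic i = insert i (Finset.Iio i) := by
    ext x; simp [Finset.mem_Iic, Finset.mem_Iio, le_iff_lt_or_eq, or_comm]
  rw [hsplit, Finset.sum_insert (by simp), Finset.sum_insert (by simp)] at hmaj
  have heq : ∑ i' ∈ Finset.Iio i, sortDesc (a + b) i' =
      ∑ i' ∈ Finset.Iio i, (sortDesc a i' + sortDesc b i') := by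
    apply Finset.sum_congr rfl
    intro x hx
    exact h x (Finset.mem_Iio.mp hx)
  omega

/-- column sorting and entrywise addition of `ℕ`-matrices satisfy
`colSort (M + N) ≤ colSort M + colSort N` in the row-major lexicographic order. -/
theorem colSort_add_interchange {m n : ℕ} (M N : Fin m → Fin n → ℕ) :
    MatLexLe (colSort (M + N)) (colSort M + colSort N) := by
  classical
  set L := colSort (M + N) with hL
  set R := colSort M + colSort N with hR
  have key : ∀ (i : Fin m) (j : Fin n), (∀ i', i' < i → L i' j = R i' j) → L i j ≤ R i j := by
    intro i j h
    have := col_lex (fun i' => M i' j) (fun i' => N i' j) i (fun i' hi' => h i' hi')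
    exact this
  by_cases hEq : L = R
  · exact Or.inl hEq
  · right
    have hS : (Finset.univ.filter (fun i => L i ≠ R i)).Nonempty := by
      by_contra hc
      apply hEq
      funext i
      by_contra hne
      exact hc ⟨i, Finset.mem_filter.mpr ⟨Finset.mem_univ _, hne⟩⟩
    set i := (Finset.univ.filter (fun i => L i ≠ R i)).min' hS with hi
    have hiMem := (Finset.univ.filter (fun i => L i ≠ R i)).min'_mem hS
    rw [Finset.mem_filter] at hiMem
    have hrow : ∀ i', i' < i → L i' = R i' := by
      intro i' hi'
      by_contra hne
      have hmem : i' ∈ Finset.univ.filter (fun i => L i ≠ R i) := by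
        simp only [Finset.mem_filter]; exact ⟨Finset.mem_univ _, hne⟩
      have := Finset.min'_le _ i' hmem
      exact absurd (lt_of_lt_of_le hi' this) (lt_irrefl i')
    have hT : (Finset.univ.filter (fun j => L i j ≠ R i j)).Nonempty := by
      by_contra hc
      apply hiMem.2
      funext j
      by_contra hne
      exact hc ⟨j, Finset.mem_filter.mpr ⟨Finset.mem_univ _, hne⟩⟩
    set j := (Finset.univ.filter (fun j => L i j ≠ R i j)).min' hT with hj
    have hjMem := (Finset.univ.filter (fun j => L i j ≠ R i j)).min'_mem hT
    rw [Finset.mem_filter] at hjMem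
    have hcol : ∀ j', j' < j → L i j' = R i j' := by
      intro j' hj'
      by_contra hne
      have hmem : j' ∈ Finset.univ.filter (fun j => L i j ≠ R i j) := by
        simp only [Finset.mem_filter]; exact ⟨Finset.mem_univ _, hne⟩
      have := Finset.min'_le _ j' hmem
      exact absurd (lt_of_lt_of_le hj' this) (lt_irrefl j')
    refine ⟨i, j, hrow, hcol, ?_⟩
    exact lt_of_le_of_ne (key i j (fun i' hi' => by rw [hrow i' hi'])) hjMem.2
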